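/- Let Σ = (X, Y, M(U), φ, h) be a linear control system that is exponentially stable with constants M, σ > 0 and robust with respect to the input with nondecreasing function b. Then for every T > (1/σ)·ln(M), the minimum IOS-gain satisfies γ ≤ ( (1 + M·(1 − e^{−σT})) / (1 − M·e^{−σT}) )·b(T); in particular γ < +∞. -/

import Mathlib

open Filter

noncomputable section

/-- A linear control system `Σ = (X, Y, M(U), φ, h)` in the sense of
Karafyllis, "On the Relation of IOS-Gains and Asymptotic Gains For Linear Systems".
Inputs are functions `u : ℝ → U`; only values on `[0, ∞)` are relevant. -/
structure LinearControlSystem (X Y U : Type*)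
    [NormedAddCommGroup X] [NormedSpace ℝ X]
    [NormedAddCommGroup Y] [NormedSpace ℝ Y]
    [NormedAddCommGroup U] [NormedSpace ℝ U] where
  /-- the set `M(U)` of admissible inputs -/
  inputs : Set (ℝ → U)
  /-- the transition map `φ` -/
  trans : ℝ → X → (ℝ → U) → X
  /-- the continuous linear output map `h : X → Y` -/
  out : X →L[ℝ] Y
  /-- `U ≠ {0}` -/
  U_nontrivial : ∃ v : U, v ≠ 0
  /-- inputs are locally bounded -/
  loc_bdd : ∀ u ∈ inputs, ∀ T : ℝ, BddAbove ((fun s => ‖u s‖) '' Set.Icc 0 T)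
  zero_mem : (0 : ℝ → U) ∈ inputs
  add_mem : ∀ u₁ ∈ inputs, ∀ u₂ ∈ inputs, u₁ + u₂ ∈ inputs
  smul_mem : ∀ u ∈ inputs, ∀ c : ℝ, c • u ∈ inputs
  concat_le_mem : ∀ u₁ ∈ inputs, ∀ u₂ ∈ inputs, ∀ τ > (0 : ℝ),
    (fun t => if t ≤ τ then u₁ t else u₂ (t - τ)) ∈ inputs
  concat_lt_mem : ∀ u₁ ∈ inputs, ∀ u₂ ∈ inputs, ∀ τ > (0 : ℝ),
    (fun t => if t < τ then u₁ t else u₂ (t - τ)) ∈ inputs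
  /-- closure under the shift operator `δ_τ` -/
  shift_mem : ∀ u ∈ inputs, ∀ τ > (0 : ℝ), (fun t => u (t + τ)) ∈ inputs
  exists_input_val : ∀ v : U, ∃ u ∈ inputs, u 0 = v
  /-- closure under `T`-periodic extension -/
  periodic_ext_mem : ∀ u ∈ inputs, ∀ T > (0 : ℝ),
    (fun t => u (t - T * ⌊t / T⌋)) ∈ inputs
  identity : ∀ x : X, ∀ u ∈ inputs, trans 0 x u = x
  causality : ∀ t ≥ (0 : ℝ), ∀ x : X, ∀ u ∈ inputs, ∀ v ∈ inputs,
    (∀ s, 0 ≤ s → s ≤ t → u s = v s) → trans t x u = trans t x v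
  semigroup : ∀ x : X, ∀ u ∈ inputs, ∀ τ t : ℝ, 0 ≤ τ → τ ≤ t →
    trans t x u = trans (t - τ) (trans τ x u) (fun s => u (s + τ))
  linearity : ∀ t ≥ (0 : ℝ), ∀ x₁ x₂ : X, ∀ u₁ ∈ inputs, ∀ u₂ ∈ inputs, ∀ a b : ℝ,
    trans t (a • x₁ + b • x₂) (a • u₁ + b • u₂) = a • trans t x₁ u₁ + b • trans t x₂ u₂

namespace LinearControlSystem

variable {X Y U : Type*}
    [NormedAddCommGroup X] [NormedSpace ℝ X]
    [NormedAddCommGroup Y] [NormedSpace ℝ Y]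
    [NormedAddCommGroup U] [NormedSpace ℝ U]

/-- `sup_{0 ≤ s ≤ t} ‖u(s)‖`. -/
def runSup (u : ℝ → U) (t : ℝ) : ℝ :=
  sSup ((fun s => ‖u s‖) '' Set.Icc 0 t)

/-- `sup_{s ≥ 0} ‖u(s)‖`. -/
def supNorm (u : ℝ → U) : ℝ :=
  sSup ((fun s => ‖u s‖) '' Set.Ici 0)

/-- exponential stability with the specific constants `M, σ > 0` -/
def IsES (sys : LinearControlSystem X Y U) (M σ : ℝ) : Prop :=
  0 < M ∧ 0 < σ ∧ ∀ x : X, ∀ t ≥ (0 : ℝ),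
    ‖sys.trans t x 0‖ ≤ M * Real.exp (-σ * t) * ‖x‖

/-- exponential stability (ES) -/
def ES (sys : LinearControlSystem X Y U) : Prop :=
  ∃ M σ : ℝ, sys.IsES M σ

/-- robustness with respect to the input, with the specific nondecreasing function `b` -/
def IsRobust (sys : LinearControlSystem X Y U) (b : ℝ → ℝ) : Prop :=
  MonotoneOn b (Set.Ici 0) ∧ (∀ t, 0 ≤ b t) ∧
    ∀ u ∈ sys.inputs, ∀ t ≥ (0 : ℝ), ‖sys.trans t 0 u‖ ≤ b t * runSup u t

/-- robustness with respect to the input -/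
def Robust (sys : LinearControlSystem X Y U) : Prop :=
  ∃ b : ℝ → ℝ, sys.IsRobust b

/-- strict causality -/
def StrictlyCausal (sys : LinearControlSystem X Y U) : Prop :=
  ∀ t > (0 : ℝ), ∀ u ∈ sys.inputs, ∀ v ∈ sys.inputs,
    (∀ s, 0 ≤ s → s < t → u s = v s) → sys.trans t 0 u = sys.trans t 0 v

/-- the minimum IOS-gain `γ` -/
def gain (sys : LinearControlSystem X Y U) : ℝ :=
  sSup {r | ∃ t ≥ (0 : ℝ), ∃ u ∈ sys.inputs, runSup u t = 1 ∧ r = ‖sys.out (sys.trans t 0 u)‖}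

/-- the minimum output asymptotic gain `γ_as` -/
def asympGain (sys : LinearControlSystem X Y U) : ℝ :=
  sSup {r | ∃ u ∈ sys.inputs, supNorm u = 1 ∧
    r = limsup (fun t => ‖sys.out (sys.trans t 0 u)‖) atTop}

/-- the value `V(T)` of the optimal control problem (4.5) -/
def V (sys : LinearControlSystem X Y U) (T : ℝ) : ℝ :=
  sSup {r | ∃ u ∈ sys.inputs, runSup u T = 1 ∧ r = ‖sys.out (sys.trans T 0 u)‖}

/-- periodic inputs -/
def Periodic (u : ℝ → U) : Prop :=
  ∃ T > (0 : ℝ), ∀ t ≥ (0 : ℝ), u (t + T) = u t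

end LinearControlSystem

open LinearControlSystem in
/-- Remark 4.2: for an ES, robust linear control system (with output the identity map),
for every `T > (1/σ)·ln M` the minimum IOS-gain satisfies
`γ ≤ ((1 + M·(1 − e^{−σT}))/(1 − M·e^{−σT}))·b(T)`; in particular `γ < +∞`, i.e. the set
defining `γ` is bounded above. -/
theorem statement_5 {X U : Type*}
    [NormedAddCommGroup X] [NormedSpace ℝ X]
    [NormedAddCommGroup U] [NormedSpace ℝ U]
    (sys : LinearControlSystem X X U) (hout : ∀ x : X, sys.out x = x)
    (M σ : ℝ) (b : ℝ → ℝ) (hES : sys.IsES M σ) (hrob : sys.IsRobust b)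
    (T : ℝ) (hT : T > (1 / σ) * Real.log M) :
    sys.gain ≤ (1 + M * (1 - Real.exp (-σ * T))) / (1 - M * Real.exp (-σ * T)) * b T ∧
    BddAbove {r | ∃ t ≥ (0 : ℝ), ∃ u ∈ sys.inputs,
      runSup u t = 1 ∧ r = ‖sys.out (sys.trans t 0 u)‖} := by
  obtain ⟨hM, hσ, hES⟩ := hES
  obtain ⟨hbmono, hbnn, hrob⟩ := hrob
  set q := M * Real.exp (-σ * T) with hqdef
  have hq0 : 0 ≤ q := by positivity
  have hq1 : q < 1 := by
    have h1 : Real.log M < σ * T := by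
      have h2 := mul_lt_mul_of_pos_left hT hσ
      have hσne : σ ≠ 0 := ne_of_gt hσ
      calc Real.log M = σ * (1 / σ * Real.log M) := by field_simp
        _ < σ * T := h2
    have heq : q = Real.exp (Real.log M + -σ * T) := by
      rw [Real.exp_add, Real.exp_log hM, hqdef]
    rw [heq]
    calc Real.exp (Real.log M + -σ * T) < Real.exp 0 :=
          Real.exp_lt_exp.mpr (by linarith)
      _ = 1 := Real.exp_zero
  have hd : 0 < 1 - q := by linarith
  set R := (1 + M * (1 - Real.exp (-σ * T))) / (1 - M * Real.exp (-σ * T)) * b T with hRdef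
  have hR0 : 0 ≤ R := by
    have hnum : 0 < 1 + M * (1 - Real.exp (-σ * T)) := by nlinarith
    have hbT := hbnn T
    rw [hRdef]
    have hdd : 0 < 1 - M * Real.exp (-σ * T) := hd
    positivity
  have hrs_mono : ∀ u ∈ sys.inputs, ∀ s t : ℝ, 0 ≤ s → s ≤ t →
      runSup u s ≤ runSup u t := by
    intro u hu s t hs hst
    apply csSup_le_csSup (sys.loc_bdd u hu t)
    · exact ⟨‖u 0‖, 0, ⟨le_rfl, hs⟩, rfl⟩
    · exact Set.image_mono (Set.Icc_subset_Icc le_rfl hst)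
  have hrs_nonneg : ∀ u ∈ sys.inputs, ∀ t : ℝ, 0 ≤ t → 0 ≤ runSup u t := by
    intro u hu t ht
    have h := le_csSup (sys.loc_bdd u hu t)
      (Set.mem_image_of_mem _ (Set.mem_Icc.mpr ⟨le_rfl, ht⟩))
    exact le_trans (norm_nonneg (u 0)) h
  have hbound : ∀ r ∈ {r | ∃ t ≥ (0 : ℝ), ∃ u ∈ sys.inputs,
      runSup u t = 1 ∧ r = ‖sys.out (sys.trans t 0 u)‖}, r ≤ R := by
    rcases lt_or_ge M 1 with hM1 | hM1
    · -- degenerate case: X is trivial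
      have hX : ∀ x : X, x = 0 := by
        intro x
        have h0 := hES x 0 le_rfl
        rw [sys.identity x 0 sys.zero_mem] at h0
        simp only [mul_zero, neg_zero, Real.exp_zero, mul_one] at h0
        have hxn : ‖x‖ = 0 := by nlinarith [norm_nonneg x]
        exact norm_eq_zero.mp hxn
      rintro r ⟨t, ht, u, hu, hrs, rfl⟩
      rw [hX (sys.trans t 0 u)]
      simpa using hR0
    · -- main case: M ≥ 1, hence T > 0
      have hTpos : 0 < T := by
        have hlM : 0 ≤ Real.log M := Real.log_nonneg hM1
        have h3 : 0 ≤ 1 / σ * Real.log M := by positivity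
        linarith
      have hexpT : Real.exp (-σ * T) ≤ 1 := by
        rw [show (1:ℝ) = Real.exp 0 by simp]
        exact Real.exp_le_exp.mpr (by nlinarith)
      -- the key induction: an a priori bound on all trajectories from 0
      have key : ∀ n : ℕ, ∀ t : ℝ, 0 ≤ t → t ≤ (n + 1) * T → ∀ u ∈ sys.inputs,
          runSup u t ≤ 1 → ‖sys.trans t 0 u‖ ≤ b T / (1 - q) := by
        intro n
        induction n with
        | zero =>
          intro t ht htT u hu hru
          simp only [Nat.cast_zero, zero_add, one_mul] at htT
          have h1 := hrob u hu t ht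
          have h2 : b t ≤ b T := hbmono ht (le_of_lt hTpos) htT
          have h3 : b t * runSup u t ≤ b T * 1 :=
            mul_le_mul h2 hru (hrs_nonneg u hu t ht) (hbnn T)
          have h4 : b T ≤ b T / (1 - q) := by
            rw [le_div_iff₀ hd]
            nlinarith [hbnn T]
          linarith
        | succ n ih =>
          intro t ht htT u hu hru
          by_cases hcase : t ≤ (n + 1) * T
          · exact ih t ht hcase u hu hru
          push_neg at hcase
          have hnT : ((n : ℝ) + 1) * T ≥ T := by
            have : (0:ℝ) ≤ (n : ℝ) * T := by positivity
            nlinarith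
          have hτpos : 0 < t - T := by linarith
          set τ := t - T with hτdef
          set v : ℝ → U := fun s => u (s + τ) with hvdef
          have hv : v ∈ sys.inputs := sys.shift_mem u hu τ hτpos
          have hsg := sys.semigroup 0 u hu τ t (le_of_lt hτpos) (by linarith)
          have htτ : t - τ = T := by rw [hτdef]; ring
          rw [htτ] at hsg
          set x := sys.trans τ 0 u with hxdef
          -- decomposition trans T x v = trans T x 0 + trans T 0 v
          have hlin := sys.linearity T (le_of_lt hTpos) x 0 0 sys.zero_mem v hv 1 1
          have hsimp1 : (1:ℝ) • x + (1:ℝ) • (0:X) = x := by simp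
          have hsimp2 : (1:ℝ) • (0 : ℝ → U) + (1:ℝ) • v = v := by simp
          rw [hsimp1, hsimp2, one_smul, one_smul] at hlin
          -- bound on ‖x‖ by induction hypothesis
          have hτle : τ ≤ ((n : ℝ) + 1) * T := by
            have : t ≤ ((n : ℝ) + 1 + 1) * T := by
              have := htT
              push_cast at this ⊢
              linarith
            rw [hτdef]; nlinarith
          have hruτ : runSup u τ ≤ 1 :=
            le_trans (hrs_mono u hu τ t (le_of_lt hτpos) (by linarith)) hru
          have hxle : ‖x‖ ≤ b T / (1 - q) := ih τ (le_of_lt hτpos) hτle u hu hruτ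
          -- bound on runSup v T
          have hrv : runSup v T ≤ 1 := by
            apply Real.sSup_le _ zero_le_one
            rintro r ⟨s, ⟨hs0, hsT⟩, rfl⟩
            have hmem : s + τ ∈ Set.Icc (0:ℝ) t := ⟨by linarith, by linarith⟩
            have h5 : ‖u (s + τ)‖ ≤ runSup u t :=
              le_csSup (sys.loc_bdd u hu t) (Set.mem_image_of_mem _ hmem)
            exact le_trans h5 hru
          -- assemble
          have h6 : ‖sys.trans t 0 u‖ ≤ ‖sys.trans T x (0 : ℝ → U)‖ + ‖sys.trans T 0 v‖ := by
            rw [hsg, hlin]; exact norm_add_le _ _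
          have h7 : ‖sys.trans T x (0 : ℝ → U)‖ ≤ q * ‖x‖ := by
            rw [hqdef]
            exact hES x T (le_of_lt hTpos)
          have h8 : ‖sys.trans T 0 v‖ ≤ b T * 1 := by
            have h9 := hrob v hv T (le_of_lt hTpos)
            have h10 : b T * runSup v T ≤ b T * 1 :=
              mul_le_mul_of_nonneg_left hrv (hbnn T)
            linarith
          have h11 : q * ‖x‖ ≤ q * (b T / (1 - q)) :=
            mul_le_mul_of_nonneg_left hxle hq0
          have h12 : q * (b T / (1 - q)) + b T = b T / (1 - q) := by
            field_simp
            ring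
          linarith
      -- conclude
      rintro r ⟨t, ht, u, hu, hrs, rfl⟩
      obtain ⟨n, hn⟩ := exists_nat_ge (t / T)
      have htn : t ≤ ((n : ℝ) + 1) * T := by
        have h13 : t / T ≤ (n : ℝ) := hn
        have h14 : t ≤ (n : ℝ) * T := by
          rw [div_le_iff₀ hTpos] at h13
          linarith
        nlinarith
      have hkey := key n t ht htn u hu (le_of_eq hrs)
      have hRge : b T / (1 - q) ≤ R := by
        rw [hRdef, div_mul_eq_mul_div]
        have h15 : b T ≤ (1 + M * (1 - Real.exp (-σ * T))) * b T := by
          nlinarith [hbnn T]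
        exact div_le_div_of_nonneg_right h15 hd.le
      rw [hout]
      linarith
  constructor
  · exact Real.sSup_le hbound hR0
  · exact ⟨R, hbound⟩
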